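/- arXiv:2210.13373 — 2 statements merged into one kernel-verified Lean document; each statement's English description precedes it below -/
import Mathlib

section
/- Let $B$ be a symmetric real $n \times n$ matrix with spectral decomposition $B = U_+ \Lambda_+ U_+^\top + U_- \Lambda_- U_-^\top$, where $\Lambda_+$ is the diagonal matrix of the $d_+ \geq 1$ positive eigenvalues, $\Lambda_-$ that of the $d_- \geq 1$ negative eigenvalues, $d_+ + d_- = n$, and $U_+, U_-$ the corresponding orthonormal eigenvector matrices. Define $A^* = \alpha (U_+ (d_+ \Lambda_+) U_+^\top + U_- (-d_- \Lambda_-) U_-^\top)$ for any $\alpha > 0$. Then $A^*$ is symmetric positive definite and $\operatorname{tr}((A^*)^{-1} B) = 0$. -/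
open Matrix

private lemma sandwich_mul {n k l : ℕ} (U : Matrix (Fin n) (Fin k) ℝ)
    (V : Matrix (Fin n) (Fin l) ℝ) (X : Matrix (Fin k) (Fin k) ℝ)
    (Y : Matrix (Fin l) (Fin l) ℝ) (W : Matrix (Fin k) (Fin l) ℝ)
    (h : Uᵀ * V = W) :
    U * X * Uᵀ * (V * Y * Vᵀ) = U * (X * (W * Y)) * Vᵀ := by
  subst h
  simp only [Matrix.mul_assoc]

theorem indefinite_hessian_metric_zero_trace
    (n dp dm : ℕ) (hdp : 1 ≤ dp) (hdm : 1 ≤ dm) (hsum : dp + dm = n)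
    (B : Matrix (Fin n) (Fin n) ℝ) (hBsymm : B.IsSymm)
    (Up : Matrix (Fin n) (Fin dp) ℝ) (Um : Matrix (Fin n) (Fin dm) ℝ)
    (lp : Fin dp → ℝ) (lm : Fin dm → ℝ)
    (hlp : ∀ i, 0 < lp i) (hlm : ∀ i, lm i < 0)
    (hUp : Upᵀ * Up = 1) (hUm : Umᵀ * Um = 1) (hUpm : Upᵀ * Um = 0)
    (hB : B = Up * Matrix.diagonal lp * Upᵀ + Um * Matrix.diagonal lm * Umᵀ)
    (α : ℝ) (hα : 0 < α)
    (Astar : Matrix (Fin n) (Fin n) ℝ)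
    (hAstar : Astar = α •
      (Up * ((dp : ℝ) • Matrix.diagonal lp) * Upᵀ +
       Um * ((-(dm : ℝ)) • Matrix.diagonal lm) * Umᵀ)) :
    Astar.PosDef ∧ (Astar⁻¹ * B).trace = 0 := by
  have hUmp : Umᵀ * Up = 0 := by
    have := congrArg Matrix.transpose hUpm
    simpa [Matrix.transpose_mul] using this
  -- completeness: Up * Upᵀ + Um * Umᵀ = 1
  have e : (Fin dp ⊕ Fin dm) ≃ Fin n := finSumFinEquiv.trans (finCongr hsum)
  have hWtW : fromRows Upᵀ Umᵀ * fromCols Up Um = 1 := by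
    rw [fromRows_mul_fromCols, hUp, hUm, hUpm, hUmp, fromBlocks_one]
  have hWWt : fromCols Up Um * fromRows Upᵀ Umᵀ = 1 :=
    (mul_eq_one_comm_of_equiv e.symm).mpr hWtW
  have hcomplete : Up * Upᵀ + Um * Umᵀ = 1 := by
    rw [← fromCols_mul_fromRows]; exact hWWt
  have hdp0 : (dp : ℝ) ≠ 0 := Nat.cast_ne_zero.mpr (by omega)
  have hdm0 : (dm : ℝ) ≠ 0 := Nat.cast_ne_zero.mpr (by omega)
  have hlp0 : ∀ i, lp i ≠ 0 := fun i => (hlp i).ne'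
  have hlm0 : ∀ i, lm i ≠ 0 := fun i => (hlm i).ne
  have hdiagp : Matrix.diagonal (fun i => (lp i)⁻¹) * Matrix.diagonal lp = 1 := by
    rw [diagonal_mul_diagonal]
    have : (fun i => (lp i)⁻¹ * lp i) = fun _ => (1:ℝ) := by
      funext i; exact inv_mul_cancel₀ (hlp0 i)
    rw [this, diagonal_one]
  have hdiagm : Matrix.diagonal (fun i => (lm i)⁻¹) * Matrix.diagonal lm = 1 := by
    rw [diagonal_mul_diagonal]
    have : (fun i => (lm i)⁻¹ * lm i) = fun _ => (1:ℝ) := by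
      funext i; exact inv_mul_cancel₀ (hlm0 i)
    rw [this, diagonal_one]
  set C : Matrix (Fin n) (Fin n) ℝ :=
    α⁻¹ • (Up * (((dp : ℝ))⁻¹ • Matrix.diagonal (fun i => (lp i)⁻¹)) * Upᵀ +
      Um * ((-(dm : ℝ))⁻¹ • Matrix.diagonal (fun i => (lm i)⁻¹)) * Umᵀ) with hC
  have hCB : C * B = α⁻¹ • (((dp : ℝ))⁻¹ • (Up * Upᵀ) + (-((dm : ℝ))⁻¹) • (Um * Umᵀ)) := by
    rw [hC, hB, Matrix.smul_mul, Matrix.add_mul, Matrix.mul_add, Matrix.mul_add]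
    rw [sandwich_mul Up Up _ _ _ hUp, sandwich_mul Up Um _ _ _ hUpm,
      sandwich_mul Um Up _ _ _ hUmp, sandwich_mul Um Um _ _ _ hUm]
    simp only [Matrix.zero_mul, Matrix.mul_zero, add_zero, zero_add, Matrix.one_mul,
      smul_mul_assoc, hdiagp, hdiagm]
    simp only [Matrix.mul_smul, Matrix.mul_one, Matrix.smul_mul, smul_mul_assoc, neg_inv]
  have hAC : Astar * C = 1 := by
    rw [hAstar, hC, smul_mul_assoc, mul_smul_comm, smul_smul, mul_inv_cancel₀ hα.ne',
      one_smul, Matrix.add_mul, Matrix.mul_add, Matrix.mul_add]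
    rw [sandwich_mul Up Up _ _ _ hUp, sandwich_mul Up Um _ _ _ hUpm,
      sandwich_mul Um Up _ _ _ hUmp, sandwich_mul Um Um _ _ _ hUm]
    have hdiagp' : Matrix.diagonal lp * Matrix.diagonal (fun i => (lp i)⁻¹) = 1 := by
      rw [diagonal_mul_diagonal]
      have : (fun i => lp i * (lp i)⁻¹) = fun _ => (1:ℝ) := by
        funext i; exact mul_inv_cancel₀ (hlp0 i)
      rw [this, diagonal_one]
    have hdiagm' : Matrix.diagonal lm * Matrix.diagonal (fun i => (lm i)⁻¹) = 1 := by
      rw [diagonal_mul_diagonal]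
      have : (fun i => lm i * (lm i)⁻¹) = fun _ => (1:ℝ) := by
        funext i; exact mul_inv_cancel₀ (hlm0 i)
      rw [this, diagonal_one]
    simp only [Matrix.zero_mul, Matrix.mul_zero, smul_zero, add_zero, zero_add,
      Matrix.one_mul, smul_mul_assoc, mul_smul_comm, smul_smul]
    rw [hdiagp', hdiagm', inv_mul_cancel₀ hdp0,
      inv_mul_cancel₀ (show (-(dm:ℝ)) ≠ 0 by simpa using hdm0), one_smul, one_smul,
      Matrix.mul_one, Matrix.mul_one, hcomplete]
  have hinv : Astar⁻¹ = C := Matrix.inv_eq_right_inv hAC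
  constructor
  · -- PosDef
    refine Matrix.posDef_iff_dotProduct_mulVec.mpr ⟨?_, ?_⟩
    · -- Hermitian
      rw [hAstar]
      show _ᴴ = _
      rw [conjTranspose_eq_transpose_of_trivial]
      simp only [transpose_smul, transpose_add, transpose_mul, transpose_transpose,
        transpose_smul, diagonal_transpose, Matrix.mul_assoc]
    · intro x hx
      have hxdef : x = Up *ᵥ (Upᵀ *ᵥ x) + Um *ᵥ (Umᵀ *ᵥ x) := by
        rw [mulVec_mulVec, mulVec_mulVec, ← Matrix.add_mulVec, hcomplete, Matrix.one_mulVec]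
      set y := Upᵀ *ᵥ x with hy
      set z := Umᵀ *ᵥ x with hz
      have hquad : ∀ {k : ℕ} (U : Matrix (Fin n) (Fin k) ℝ) (d : Fin k → ℝ),
          x ⬝ᵥ (U * Matrix.diagonal d * Uᵀ) *ᵥ x
          = ∑ i, d i * (Uᵀ *ᵥ x) i ^ 2 := by
        intro k U d
        rw [← Matrix.mulVec_mulVec, ← Matrix.mulVec_mulVec, Matrix.dotProduct_mulVec,
          ← Matrix.mulVec_transpose]
        simp only [dotProduct, mulVec_diagonal]
        exact Finset.sum_congr rfl fun i _ => by ring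
      have hAq : star x ⬝ᵥ Astar *ᵥ x
          = α * ((dp : ℝ) * ∑ i, lp i * y i ^ 2 + (dm : ℝ) * ∑ i, (-lm i) * z i ^ 2) := by
        rw [show star x = x from rfl, hAstar]
        simp only [Matrix.mul_smul, mul_smul_comm, smul_mul_assoc, Matrix.smul_mulVec,
          Matrix.add_mulVec, dotProduct_add, dotProduct_smul, smul_eq_mul]
        simp only [Matrix.smul_mul, Matrix.smul_mulVec, dotProduct_smul, smul_eq_mul]
        rw [hquad Up lp, hquad Um lm, ← hy, ← hz]
        rw [show ∑ i, (-lm i) * z i ^ 2 = -∑ i, lm i * z i ^ 2 by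
          rw [← Finset.sum_neg_distrib]; exact Finset.sum_congr rfl fun i _ => by ring]
        ring
      rw [hAq]
      have hyz : y ≠ 0 ∨ z ≠ 0 := by
        by_contra h
        push_neg at h
        apply hx
        rw [hxdef, h.1, h.2]
        simp
      have h1 : 0 ≤ ∑ i, lp i * y i ^ 2 :=
        Finset.sum_nonneg fun i _ => mul_nonneg (hlp i).le (sq_nonneg _)
      have h2 : 0 ≤ ∑ i, (-lm i) * z i ^ 2 :=
        Finset.sum_nonneg fun i _ => mul_nonneg (by linarith [hlm i]) (sq_nonneg _)
      have hpos : 0 < (dp : ℝ) * ∑ i, lp i * y i ^ 2 + (dm : ℝ) * ∑ i, (-lm i) * z i ^ 2 := by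
        rcases hyz with hy0 | hz0
        · obtain ⟨i, hi⟩ := Function.ne_iff.mp hy0
          have : 0 < ∑ i, lp i * y i ^ 2 := by
            apply Finset.sum_pos' (fun j _ => mul_nonneg (hlp j).le (sq_nonneg _))
            exact ⟨i, Finset.mem_univ i, mul_pos (hlp i) (sq_pos_of_ne_zero hi)⟩
          have hdp1 : (1:ℝ) ≤ (dp:ℝ) := by exact_mod_cast hdp
          nlinarith
        · obtain ⟨i, hi⟩ := Function.ne_iff.mp hz0
          have : 0 < ∑ i, (-lm i) * z i ^ 2 := by
            apply Finset.sum_pos' (fun j _ => mul_nonneg (by linarith [hlm j]) (sq_nonneg _))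
            exact ⟨i, Finset.mem_univ i, mul_pos (by linarith [hlm i]) (sq_pos_of_ne_zero hi)⟩
          have hdm1 : (1:ℝ) ≤ (dm:ℝ) := by exact_mod_cast hdm
          nlinarith
      exact mul_pos hα hpos
  · -- trace
    rw [hinv, hCB]
    rw [trace_smul, trace_add, trace_smul, trace_smul, Matrix.trace_mul_comm Up,
      Matrix.trace_mul_comm Um, hUp, hUm]
    simp only [trace_one, smul_eq_mul]
    field_simp
    simp only [Fintype.card_fin]; ring
end

section
/- Let $B$ be a symmetric real $n \times n$ matrix with $d_+ \geq 1$ positive and $d_- \geq 1$ negative eigenvalues and no zero eigenvalues ($d_+ + d_- = n$), with eigendecomposition $B = U M U^\top$ where $M = \operatorname{diag}(\Lambda_+, \Lambda_-)$. Let $D = \operatorname{diag}(d_+ \Lambda_+, -d_- \Lambda_-)$ and $\alpha = |\det(U D U^\top)|^{-1/n}$. Then $A^* = \alpha U D U^\top$ satisfies $\det(A^*) = 1$, $A^* \succ 0$, $A^* = (A^*)^\top$, and $\operatorname{tr}((A^*)^{-1} B) = 0$; in particular $A^*$ attains the minimum value $0$ of $(\operatorname{tr}(A^{-1}B))^2$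 over all symmetric positive definite $A$ with $\det A = 1$. -/
open Matrix

theorem optimal_metric_indefinite_case
    (dp dm n : ℕ) (hdp : 1 ≤ dp) (hdm : 1 ≤ dm) (hsum : dp + dm = n)
    (B U : Matrix (Fin dp ⊕ Fin dm) (Fin dp ⊕ Fin dm) ℝ)
    (hBsymm : B.IsSymm)
    (lp : Fin dp → ℝ) (lm : Fin dm → ℝ)
    (hlp : ∀ i, 0 < lp i) (hlm : ∀ i, lm i < 0)
    (hU : U * Uᵀ = 1)
    (hB : B = U * Matrix.diagonal (Sum.elim lp lm) * Uᵀ)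
    (Dmat : Matrix (Fin dp ⊕ Fin dm) (Fin dp ⊕ Fin dm) ℝ)
    (hD : Dmat = Matrix.diagonal
      (Sum.elim (fun i => (dp : ℝ) * lp i) (fun i => -(dm : ℝ) * lm i)))
    (α : ℝ) (hα : α = |(U * Dmat * Uᵀ).det| ^ (-(1 : ℝ) / (n : ℝ)))
    (Astar : Matrix (Fin dp ⊕ Fin dm) (Fin dp ⊕ Fin dm) ℝ)
    (hAstar : Astar = α • (U * Dmat * Uᵀ)) :
    Astar.det = 1 ∧ Astar.PosDef ∧ Astar.IsSymm ∧ (Astar⁻¹ * B).trace = 0 ∧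
    ∀ A : Matrix (Fin dp ⊕ Fin dm) (Fin dp ⊕ Fin dm) ℝ,
      A.PosDef → A.IsSymm → A.det = 1 →
      (Astar⁻¹ * B).trace ^ 2 ≤ (A⁻¹ * B).trace ^ 2 := by
  have hdp0 : (dp : ℝ) ≠ 0 := Nat.cast_ne_zero.mpr (by omega)
  have hdm0 : (dm : ℝ) ≠ 0 := Nat.cast_ne_zero.mpr (by omega)
  have hn0 : (n : ℕ) ≠ 0 := by omega
  set f : Fin dp ⊕ Fin dm → ℝ :=
    Sum.elim (fun i => (dp : ℝ) * lp i) (fun i => -(dm : ℝ) * lm i) with hf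
  have hfpos : ∀ i, 0 < f i := by
    rintro (i | i)
    · exact mul_pos (by positivity) (hlp i)
    · have h1 : (0:ℝ) < (dm:ℝ) := by positivity
      have := hlm i
      show 0 < -(dm:ℝ) * lm i
      nlinarith
  have hUtU : Uᵀ * U = 1 := mul_eq_one_comm.mp hU
  have hdetUU : U.det * Uᵀ.det = 1 := by
    rw [← Matrix.det_mul, hU, Matrix.det_one]
  have hdetD : Dmat.det = ∏ i, f i := by rw [hD, Matrix.det_diagonal]
  have hdetDpos : 0 < Dmat.det := by
    rw [hdetD]; exact Finset.prod_pos fun i _ => hfpos i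
  have hdetC : (U * Dmat * Uᵀ).det = Dmat.det := by
    rw [Matrix.det_mul, Matrix.det_mul]
    nlinarith [hdetUU]
  have hdetCpos : 0 < (U * Dmat * Uᵀ).det := hdetC ▸ hdetDpos
  have habs : |(U * Dmat * Uᵀ).det| = (U * Dmat * Uᵀ).det := abs_of_pos hdetCpos
  have hαpos : 0 < α := by
    rw [hα]; exact Real.rpow_pos_of_pos (abs_pos.mpr hdetCpos.ne') _
  have hcard : Fintype.card (Fin dp ⊕ Fin dm) = n := by
    simp [Fintype.card_sum, hsum]
  have hαn : α ^ n * (U * Dmat * Uᵀ).det = 1 := by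
    have h1 : α ^ n = (U * Dmat * Uᵀ).det⁻¹ := by
      rw [hα, habs,
        ← Real.rpow_natCast ((U * Dmat * Uᵀ).det ^ (-(1:ℝ) / (n:ℝ))) n,
        ← Real.rpow_mul hdetCpos.le,
        div_mul_cancel₀ (-(1:ℝ)) (Nat.cast_ne_zero.mpr hn0),
        Real.rpow_neg_one]
    rw [h1, inv_mul_cancel₀ hdetCpos.ne']
  have hdet1 : Astar.det = 1 := by
    rw [hAstar, Matrix.det_smul, hcard, hαn]
  have hsymm : Astar.IsSymm := by
    rw [hAstar, Matrix.IsSymm]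
    rw [Matrix.transpose_smul, Matrix.transpose_mul, Matrix.transpose_mul,
      Matrix.transpose_transpose, hD, Matrix.diagonal_transpose, Matrix.mul_assoc]
  have hDpos : (Matrix.diagonal f).PosDef := Matrix.PosDef.diagonal hfpos
  have hpos : Astar.PosDef := by
    refine Matrix.PosDef.of_dotProduct_mulVec_pos ?_ ?_
    · show Astarᴴ = Astar
      have h1 : Astarᴴ = Astarᵀ := by
        ext i j
        simp [Matrix.conjTranspose_apply, Matrix.transpose_apply]
      rw [h1]; exact hsymm
    · intro x hx
      have hy : Uᵀ *ᵥ x ≠ 0 := by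
        intro h
        apply hx
        have h2 : (U * Uᵀ) *ᵥ x = U *ᵥ (Uᵀ *ᵥ x) := (Matrix.mulVec_mulVec _ _ _).symm
        rw [hU, Matrix.one_mulVec] at h2
        rw [h2, h, Matrix.mulVec_zero]
      have key := hDpos.dotProduct_mulVec_pos hy
      have h3 : x ⬝ᵥ (U * Matrix.diagonal f * Uᵀ) *ᵥ x
          = (Uᵀ *ᵥ x) ⬝ᵥ Matrix.diagonal f *ᵥ (Uᵀ *ᵥ x) := by
        rw [Matrix.mul_assoc, ← Matrix.mulVec_mulVec, Matrix.dotProduct_mulVec,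
          ← Matrix.mulVec_mulVec, ← Matrix.mulVec_transpose]
      have h4 : star x ⬝ᵥ Astar *ᵥ x
          = α * ((Uᵀ *ᵥ x) ⬝ᵥ Matrix.diagonal f *ᵥ (Uᵀ *ᵥ x)) := by
        rw [hAstar, hD]
        simp only [Matrix.smul_mulVec, dotProduct_smul, smul_eq_mul,
          star_trivial]
        rw [h3]
      rw [h4]
      simpa using mul_pos hαpos key
  have hfinv : ∀ i, f i ≠ 0 := fun i => (hfpos i).ne'
  have hDD : Matrix.diagonal f * Matrix.diagonal f⁻¹ = 1 := by
    rw [Matrix.diagonal_mul_diagonal]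
    rw [show (fun i => f i * f⁻¹ i) = fun _ => (1:ℝ) from funext fun i => mul_inv_cancel₀ (hfinv i)]
    exact Matrix.diagonal_one
  have hprod : (U * Matrix.diagonal f * Uᵀ) * (U * Matrix.diagonal f⁻¹ * Uᵀ) = 1 := by
    calc (U * Matrix.diagonal f * Uᵀ) * (U * Matrix.diagonal f⁻¹ * Uᵀ)
        = U * Matrix.diagonal f * (Uᵀ * U) * Matrix.diagonal f⁻¹ * Uᵀ := by
          simp only [Matrix.mul_assoc]
      _ = 1 := by
          rw [hUtU, Matrix.mul_one, Matrix.mul_assoc U, hDD, Matrix.mul_one, hU]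
  have hinv : Astar⁻¹ = α⁻¹ • (U * Matrix.diagonal f⁻¹ * Uᵀ) := by
    apply Matrix.inv_eq_right_inv
    rw [hAstar, hD, Matrix.smul_mul, Matrix.mul_smul, smul_smul,
      mul_inv_cancel₀ hαpos.ne', one_smul, hprod]
  have hprod2 : (U * Matrix.diagonal f⁻¹ * Uᵀ) * (U * Matrix.diagonal (Sum.elim lp lm) * Uᵀ)
      = U * Matrix.diagonal (f⁻¹ * Sum.elim lp lm) * Uᵀ := by
    calc (U * Matrix.diagonal f⁻¹ * Uᵀ) * (U * Matrix.diagonal (Sum.elim lp lm) * Uᵀ)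
        = U * Matrix.diagonal f⁻¹ * (Uᵀ * U) * Matrix.diagonal (Sum.elim lp lm) * Uᵀ := by
          simp only [Matrix.mul_assoc]
      _ = _ := by
          rw [hUtU, Matrix.mul_one, Matrix.mul_assoc U, Matrix.diagonal_mul_diagonal]
          rfl
  have htr : (Astar⁻¹ * B).trace = 0 := by
    rw [hinv, hB, Matrix.smul_mul, hprod2, Matrix.trace_smul,
      Matrix.trace_mul_cycle, hUtU, Matrix.one_mul, Matrix.trace_diagonal]
    have hsum0 : ∑ i, (f⁻¹ * Sum.elim lp lm) i = 0 := by
      rw [Fintype.sum_sum_type]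
      have h1 : ∀ i : Fin dp, (f⁻¹ * Sum.elim lp lm) (Sum.inl i) = (dp : ℝ)⁻¹ := by
        intro i
        show (f (Sum.inl i))⁻¹ * lp i = (dp : ℝ)⁻¹
        show ((dp : ℝ) * lp i)⁻¹ * lp i = (dp : ℝ)⁻¹
        rw [mul_inv, mul_assoc, inv_mul_cancel₀ (hlp i).ne']
        simp
      have h2 : ∀ i : Fin dm, (f⁻¹ * Sum.elim lp lm) (Sum.inr i) = -(dm : ℝ)⁻¹ := by
        intro i
        show (f (Sum.inr i))⁻¹ * lm i = -(dm : ℝ)⁻¹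
        show (-(dm : ℝ) * lm i)⁻¹ * lm i = -(dm : ℝ)⁻¹
        have hlm0 : lm i ≠ 0 := (hlm i).ne
        field_simp
      simp only [h1, h2, Finset.sum_const, Finset.card_univ, Fintype.card_fin, nsmul_eq_mul]
      rw [mul_inv_cancel₀ hdp0]
      field_simp
      norm_num
    rw [hsum0, smul_zero]
  refine ⟨hdet1, hpos, hsymm, htr, fun A _ _ _ => ?_⟩
  rw [htr]
  simpa using sq_nonneg ((A⁻¹ * B).trace)
end
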